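/- Fix an integer k ≥ 2 and let W be a k × k row-stochastic, strictly positive, invertible matrix with image simplex Δ*. Fix r₀ with 0 < r₀ ≤ (2·log₂ e)/9, set r = √(r₀/(2·log₂ e)), let N = ⌊1/r⌋, and let N* be the set of probability vectors in Δ* whose coordinates are all integer multiples of 1/N; for P ∈ N* let R_P be its neighbor set. Let p_min = inf{ P y : P ∈ Δ*, y ∈ Fin k } and p_max = sup{ P y : P ∈ Δ*, y ∈ Fin k }. Then for every P ∈ N* and every Q ∈ R_P, the third absolute central moment of the log-likelihood ratio satisfies T(P‖Q) ≤ (36·√2·(log₂ e)^{3/2} / (p_min²·(1−p_max)³))·r₀^{3/2}. -/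

import Mathlib

open Finset

private lemma logb_one_add_le (u : ℝ) (hu : 0 ≤ u) :
    Real.logb 2 (1 + u) ≤ u / Real.log 2 := by
  have h2 : (0:ℝ) < Real.log 2 := Real.log_pos (by norm_num)
  have h1 : Real.log (1 + u) ≤ u := by
    have := Real.log_le_sub_one_of_pos (show (0:ℝ) < 1 + u by linarith)
    linarith
  rw [Real.logb]
  exact (div_le_div_iff_of_pos_right h2).mpr h1



/-- Kullback–Leibler divergence in bits between two (strictly positive) probability
vectors on `Fin k`. -/
noncomputable def klD {k : ℕ} (P Q : Fin k → ℝ) : ℝ :=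
  ∑ y, P y * Real.logb 2 (P y / Q y)

/-- Third absolute central moment of the log-likelihood ratio (in bits). -/
noncomputable def Tllr {k : ℕ} (P Q : Fin k → ℝ) : ℝ :=
  ∑ y, P y * |Real.logb 2 (P y / Q y) - klD P Q| ^ 3

/-- `Q` is a neighbor of `P` at grid spacing `1/N`. -/
def IsNeighbor {k : ℕ} (N : ℕ) (P Q : Fin k → ℝ) : Prop :=
  ∃ a b : Fin k, a ≠ b ∧ Q a = P a + 1 / N ∧ Q b = P b - 1 / N ∧
    ∀ i, i ≠ a → i ≠ b → Q i = P i

private lemma D_abs_bound {Pa Pb Qb La Lb cd : ℝ} (hPa : 0 < Pa) (hQb : 0 < Qb)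
    (hLaab : |La| ≤ cd / Pa) (hLa0 : La ≤ 0) (hLb0 : 0 ≤ Lb) (hLb : Lb ≤ cd / Qb)
    (hPb2 : Pb ≤ 2 * Qb) (hPb0 : 0 ≤ Pb) (hcd : 0 ≤ cd) :
    |Pa * La + Pb * Lb| ≤ 2 * cd := by
  have h1 : Pa * |La| ≤ cd := by
    have h := mul_le_mul_of_nonneg_left hLaab hPa.le
    rwa [mul_div_cancel₀ _ hPa.ne'] at h
  have h2 : Pb * Lb ≤ 2 * cd := by
    calc Pb * Lb ≤ (2 * Qb) * (cd / Qb) := mul_le_mul hPb2 hLb hLb0 (mul_nonneg (by norm_num) hQb.le)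
      _ = 2 * cd := by field_simp
  rw [abs_le]
  constructor
  · nlinarith [abs_nonneg La, neg_abs_le La, mul_nonneg hPb0 hLb0]
  · nlinarith [mul_nonpos_of_nonneg_of_nonpos hPa.le hLa0]

private lemma sub_abs_bound {L Dv cd x M : ℝ} (hx : 0 < x) (hxM : x ≤ M)
    (hL : |L| ≤ cd / x) (hD : |Dv| ≤ 2 * cd) (hcd : 0 ≤ cd) :
    |L - Dv| ≤ cd / x * (1 + 2 * M) := by
  have h2 : |L - Dv| ≤ |L| + |Dv| := abs_sub L Dv
  have h3 : 2 * cd ≤ cd / x * (2 * M) := by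
    rw [div_mul_eq_mul_div, le_div_iff₀ hx]
    nlinarith
  have e : cd / x * (1 + 2 * M) = cd / x + cd / x * (2 * M) := by ring
  linarith [e, hL, hD]

private lemma poly_bound {M : ℝ} (h0 : 0 ≤ M) (h1 : M ≤ 1) :
    (3 * (1 + 2 * M) ^ 3 + 8) * (1 - M) ^ 3 ≤ 128 / 3 := by
  have key : (1 + 2 * M) * (1 - M) ≤ 9 / 8 := by nlinarith [sq_nonneg (M - 1/4)]
  have key2 : (1 + 2 * M) ^ 3 * (1 - M) ^ 3 ≤ (9/8:ℝ) ^ 3 := by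
    calc (1 + 2 * M) ^ 3 * (1 - M) ^ 3 = ((1 + 2 * M) * (1 - M)) ^ 3 := by ring
      _ ≤ (9/8:ℝ) ^ 3 := by
          apply pow_le_pow_left₀ ?_ key 3
          nlinarith
  have key3 : (1 - M) ^ 3 ≤ 1 := by nlinarith
  have e : (3 * (1 + 2 * M) ^ 3 + 8) * (1 - M) ^ 3 =
      3 * ((1 + 2 * M) ^ 3 * (1 - M) ^ 3) + 8 * (1 - M) ^ 3 := by ring
  rw [e]; norm_num at key2 ⊢; linarith

set_option maxHeartbeats 1000000 in
/-- for grid points `P ∈ N*` and neighbors `Q ∈ R_P` at packing radius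
`r₀ ≤ (2·log₂ e)/9`, the third absolute central moment of the log-likelihood ratio
satisfies `T(P‖Q) ≤ (36·√2·(log₂ e)^{3/2}/(p_min²·(1−p_max)³))·r₀^{3/2}`. -/
theorem llr_third_moment_bound (k : ℕ) (hk : 2 ≤ k)
    (W : Matrix (Fin k) (Fin k) ℝ)
    (hpos : ∀ x y, 0 < W x y) (hrow : ∀ x, ∑ y, W x y = 1) (hinv : W.det ≠ 0)
    (Δs : Set (Fin k → ℝ))
    (hΔs : Δs = {f | ∃ p : Fin k → ℝ, (∀ i, 0 ≤ p i) ∧ (∑ i, p i = 1) ∧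
        ∀ y, f y = ∑ x, p x * W x y})
    (pmin pmax : ℝ)
    (hpmin : pmin = sInf {x : ℝ | ∃ f ∈ Δs, ∃ y : Fin k, f y = x})
    (hpmax : pmax = sSup {x : ℝ | ∃ f ∈ Δs, ∃ y : Fin k, f y = x})
    (r₀ : ℝ) (hr₀ : 0 < r₀) (hr₀' : r₀ ≤ 2 * Real.logb 2 (Real.exp 1) / 9)
    (r : ℝ) (hr : r = Real.sqrt (r₀ / (2 * Real.logb 2 (Real.exp 1))))
    (N : ℕ) (hN : N = ⌊1 / r⌋₊)
    (Nstar : Set (Fin k → ℝ))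
    (hNstar : Nstar = {f ∈ Δs | ∀ i, ∃ a : ℕ, f i = (a : ℝ) / N}) :
    ∀ P ∈ Nstar, ∀ Q ∈ Nstar, IsNeighbor N P Q →
      Tllr P Q ≤ (36 * Real.sqrt 2 * Real.logb 2 (Real.exp 1) ^ ((3 : ℝ) / 2)
          / (pmin ^ 2 * (1 - pmax) ^ 3)) * r₀ ^ ((3 : ℝ) / 2) := by
  have hlog2 : (0:ℝ) < Real.log 2 := Real.log_pos (by norm_num)
  have hcdef : Real.logb 2 (Real.exp 1) = 1 / Real.log 2 := by
    rw [Real.logb, Real.log_exp]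
  rw [hcdef] at hr₀' hr ⊢
  set c : ℝ := 1 / Real.log 2 with hcdef2
  have hcpos : (0:ℝ) < c := by positivity
  -- facts about r
  have hrpos : 0 < r := by
    rw [hr]; exact Real.sqrt_pos.mpr (by positivity)
  have hrsq : r ^ 2 = r₀ / (2 * c) := by
    rw [hr, sq, Real.mul_self_sqrt (by positivity)]
  have hr13 : r ≤ 1 / 3 := by
    rw [hr]
    have h9 : r₀ / (2 * c) ≤ 1 / 9 := by
      rw [div_le_div_iff₀ (by positivity) (by norm_num)]; linarith
    calc Real.sqrt (r₀ / (2 * c)) ≤ Real.sqrt (1 / 9) := Real.sqrt_le_sqrt h9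
      _ = 1 / 3 := by
          rw [show (1/9:ℝ) = (1/3)^2 by norm_num, Real.sqrt_sq (by norm_num)]
  have hinvr : 3 ≤ 1 / r := by rw [le_div_iff₀ hrpos]; linarith
  have hN3 : (3:ℕ) ≤ N := by
    rw [hN]; exact Nat.le_floor (by exact_mod_cast hinvr)
  have hNposR : (0:ℝ) < (N:ℝ) := by exact_mod_cast (by omega : 0 < N)
  set δ : ℝ := 1 / (N:ℝ) with hδdef
  have hδpos : 0 < δ := by positivity
  have hNlb : 2 / (3 * r) ≤ (N:ℝ) := by
    have h1 : 1 / r - 1 < (N:ℝ) := by rw [hN]; exact Nat.sub_one_lt_floor _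
    have e : 2 / (3 * r) = 2/3 * (1/r) := by ring
    linarith [e]
  have hδr : δ ≤ 3 / 2 * r := by
    have hp23 : (0:ℝ) < 2 / (3 * r) := by positivity
    have h2 := one_div_le_one_div_of_le hp23 hNlb
    rw [one_div_div] at h2
    rw [hδdef]; linarith
  -- minimal entry of W
  have hkne : Nonempty (Fin k) := ⟨⟨0, by omega⟩⟩
  haveI : Nontrivial (Fin k) :=
    ⟨⟨⟨0, by omega⟩, ⟨1, by omega⟩, by simp [Fin.ext_iff]⟩⟩
  obtain ⟨wlo, hwlo_pos, hwlo_le⟩ : ∃ w : ℝ, 0 < w ∧ ∀ x y, w ≤ W x y := by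
    have hne : (Finset.univ : Finset (Fin k × Fin k)).Nonempty := univ_nonempty
    refine ⟨Finset.univ.inf' hne (fun p => W p.1 p.2), ?_, ?_⟩
    · rw [Finset.lt_inf'_iff]
      exact fun p _ => hpos p.1 p.2
    · intro x y; exact Finset.inf'_le _ (mem_univ (x, y))
  have hWub : ∀ x y, W x y ≤ 1 - wlo := by
    intro x y
    obtain ⟨y', hy'⟩ := exists_ne y
    have hle : W x y + W x y' ≤ ∑ z, W x z := by
      rw [← Finset.sum_pair (Ne.symm hy')]
      exact Finset.sum_le_sum_of_subset_of_nonneg (subset_univ _)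
        (fun i _ _ => (hpos x i).le)
    rw [hrow x] at hle
    have := hwlo_le x y'
    linarith
  -- bounds for members of Δs
  have hmem : ∀ f ∈ Δs, (∀ y, wlo ≤ f y ∧ f y ≤ 1 - wlo) ∧ ∑ y, f y = 1 := by
    intro f hf
    rw [hΔs] at hf
    obtain ⟨p, hp0, hp1, hpf⟩ := hf
    constructor
    · intro y
      constructor
      · calc wlo = ∑ x, p x * wlo := by rw [← Finset.sum_mul, hp1, one_mul]
          _ ≤ ∑ x, p x * W x y :=
              Finset.sum_le_sum fun x _ => mul_le_mul_of_nonneg_left (hwlo_le x y) (hp0 x)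
          _ = f y := (hpf y).symm
      · calc f y = ∑ x, p x * W x y := hpf y
          _ ≤ ∑ x, p x * (1 - wlo) :=
              Finset.sum_le_sum fun x _ => mul_le_mul_of_nonneg_left (hWub x y) (hp0 x)
          _ = 1 - wlo := by rw [← Finset.sum_mul, hp1, one_mul]
    · calc ∑ y, f y = ∑ y, ∑ x, p x * W x y := by
            exact Finset.sum_congr rfl fun y _ => hpf y
        _ = ∑ x, ∑ y, p x * W x y := Finset.sum_comm
        _ = ∑ x, p x := by
            refine Finset.sum_congr rfl fun x _ => ?_
            rw [← Finset.mul_sum, hrow, mul_one]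
        _ = 1 := hp1
  -- Δs is nonempty
  have hΔne : ∃ f, f ∈ Δs := by
    refine ⟨fun y => W ⟨0, by omega⟩ y, ?_⟩
    rw [hΔs]
    refine ⟨fun x => if x = ⟨0, by omega⟩ then 1 else 0, ?_, ?_, ?_⟩
    · intro i; by_cases h : i = (⟨0, by omega⟩ : Fin k) <;> simp [h]
    · simp
    · intro y; simp
  -- pmin / pmax facts
  set S : Set ℝ := {x : ℝ | ∃ f ∈ Δs, ∃ y : Fin k, f y = x} with hS
  have hSne : S.Nonempty := by
    obtain ⟨f, hf⟩ := hΔne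
    exact ⟨f ⟨0, by omega⟩, f, hf, _, rfl⟩
  have hbdd_below : BddBelow S := by
    refine ⟨wlo, ?_⟩
    rintro x ⟨f, hf, y, rfl⟩
    exact ((hmem f hf).1 y).1
  have hbdd_above : BddAbove S := by
    refine ⟨1 - wlo, ?_⟩
    rintro x ⟨f, hf, y, rfl⟩
    exact ((hmem f hf).1 y).2
  have hpmin_ge : wlo ≤ pmin := by
    rw [hpmin]
    exact le_csInf hSne (by rintro x ⟨f, hf, y, rfl⟩; exact ((hmem f hf).1 y).1)
  have hpmin_le : ∀ f ∈ Δs, ∀ y, pmin ≤ f y := by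
    intro f hf y
    rw [hpmin]
    exact csInf_le hbdd_below ⟨f, hf, y, rfl⟩
  have hpmax_ge : ∀ f ∈ Δs, ∀ y, f y ≤ pmax := by
    intro f hf y
    rw [hpmax]
    exact le_csSup hbdd_above ⟨f, hf, y, rfl⟩
  have hpmax_le : pmax ≤ 1 - wlo := by
    rw [hpmax]
    exact csSup_le hSne (by rintro x ⟨f, hf, y, rfl⟩; exact ((hmem f hf).1 y).2)
  have hpminpos : 0 < pmin := lt_of_lt_of_le hwlo_pos hpmin_ge
  have hpmaxlt : pmax < 1 := by linarith
  have hpminmax : pmin ≤ pmax := by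
    obtain ⟨f, hf⟩ := hΔne
    exact le_trans (hpmin_le f hf ⟨0, by omega⟩) (hpmax_ge f hf ⟨0, by omega⟩)
  have hpmin1 : pmin ≤ 1 := le_trans hpminmax hpmaxlt.le
  have hpmax0 : 0 ≤ pmax := le_trans hpminpos.le hpminmax
  -- main part
  rintro P hP Q hQ ⟨a, b, hab, hQa, hQb, hQo⟩
  rw [hNstar] at hP hQ
  obtain ⟨hPΔ, hPgrid⟩ := hP
  obtain ⟨hQΔ, hQgrid⟩ := hQ
  have hPm : ∀ y, pmin ≤ P y := hpmin_le P hPΔ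
  have hPM : ∀ y, P y ≤ pmax := hpmax_ge P hPΔ
  have hQm : ∀ y, pmin ≤ Q y := hpmin_le Q hQΔ
  have hQM : ∀ y, Q y ≤ pmax := hpmax_ge Q hQΔ
  have hPsum : ∑ y, P y = 1 := (hmem P hPΔ).2
  have hPpos : ∀ y, 0 < P y := fun y => lt_of_lt_of_le hpminpos (hPm y)
  have hQpos : ∀ y, 0 < Q y := fun y => lt_of_lt_of_le hpminpos (hQm y)
  have hgridδ : ∀ (f : Fin k → ℝ), (∀ i, ∃ n : ℕ, f i = (n:ℝ) / N) →
      (∀ i, 0 < f i) → ∀ i, δ ≤ f i := by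
    intro f hg hm0 i
    obtain ⟨n, hn⟩ := hg i
    have hn1 : 1 ≤ n := by
      rcases Nat.eq_zero_or_pos n with h | h
      · exfalso; have := hm0 i; rw [hn, h] at this; simp at this
      · exact h
    rw [hn, hδdef]
    gcongr
    exact_mod_cast hn1
  have hPδ : ∀ i, δ ≤ P i := hgridδ P hPgrid hPpos
  have hQδ : ∀ i, δ ≤ Q i := hgridδ Q hQgrid hQpos
  have hQav : Q a = P a + δ := by rw [hQa, hδdef]
  have hPbv : P b = Q b + δ := by rw [hQb, hδdef]; ring
  -- abbreviations
  set D : ℝ := klD P Q with hDdef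
  set La : ℝ := Real.logb 2 (P a / Q a) with hLa
  set Lb : ℝ := Real.logb 2 (P b / Q b) with hLb
  have hsplit : ∀ g : Fin k → ℝ,
      ∑ y, g y = (∑ y ∈ univ \ {a, b}, g y) + (g a + g b) := by
    intro g
    rw [← Finset.sum_pair hab]
    exact (Finset.sum_sdiff (subset_univ _)).symm
  have hmem_sdiff : ∀ y ∈ univ \ ({a, b} : Finset (Fin k)), y ≠ a ∧ y ≠ b := by
    intro y hy
    simp only [mem_sdiff, mem_univ, true_and, mem_insert, mem_singleton] at hy
    push_neg at hy
    exact hy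
  have hlog0 : ∀ y, y ≠ a → y ≠ b → Real.logb 2 (P y / Q y) = 0 := by
    intro y hya hyb
    rw [hQo y hya hyb, div_self (hPpos y).ne', Real.logb_one]
  have hDval : D = P a * La + P b * Lb := by
    rw [hDdef, klD, hsplit (fun y => P y * Real.logb 2 (P y / Q y))]
    rw [Finset.sum_eq_zero, zero_add]
    intro y hy
    obtain ⟨hya, hyb⟩ := hmem_sdiff y hy
    rw [hlog0 y hya hyb, mul_zero]
  have hTval : Tllr P Q =
      (∑ y ∈ univ \ {a, b}, P y) * |D| ^ 3
        + (P a * |La - D| ^ 3 + P b * |Lb - D| ^ 3) := by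
    rw [Tllr, hsplit (fun y => P y * |Real.logb 2 (P y / Q y) - klD P Q| ^ 3)]
    congr 1
    rw [Finset.sum_mul]
    refine Finset.sum_congr rfl fun y hy => ?_
    obtain ⟨hya, hyb⟩ := hmem_sdiff y hy
    rw [hlog0 y hya hyb, zero_sub, abs_neg]
  have hrest0 : 0 ≤ ∑ y ∈ univ \ ({a, b} : Finset (Fin k)), P y :=
    Finset.sum_nonneg fun y _ => (hPpos y).le
  have hrest1 : ∑ y ∈ univ \ ({a, b} : Finset (Fin k)), P y ≤ 1 := by
    rw [← hPsum]
    exact Finset.sum_le_sum_of_subset_of_nonneg (sdiff_subset)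
      (fun i _ _ => (hPpos i).le)
  -- bounds on La
  have hLa_eq : La = -Real.logb 2 (1 + δ / P a) := by
    have hfrac : P a / Q a = (1 + δ / P a)⁻¹ := by
      rw [hQav, one_add_div (hPpos a).ne', inv_div]
    rw [hLa, hfrac, Real.logb_inv]
  have hLa_nonpos : La ≤ 0 := by
    rw [hLa_eq, neg_nonpos]
    exact Real.logb_nonneg (by norm_num)
      (le_add_of_nonneg_right (div_nonneg hδpos.le (hPpos a).le))
  have hLa_abs : |La| ≤ c * δ / P a := by
    rw [hLa_eq, abs_neg,
      abs_of_nonneg (Real.logb_nonneg (by norm_num)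
        (le_add_of_nonneg_right (div_nonneg hδpos.le (hPpos a).le)))]
    calc Real.logb 2 (1 + δ / P a) ≤ (δ / P a) / Real.log 2 :=
          logb_one_add_le _ (div_nonneg hδpos.le (hPpos a).le)
      _ = c * δ / P a := by rw [hcdef2]; ring
  -- bounds on Lb
  have hLb_eq : Lb = Real.logb 2 (1 + δ / Q b) := by
    have hfrac : P b / Q b = 1 + δ / Q b := by
      rw [hPbv, add_div, div_self (hQpos b).ne']
    rw [hLb, hfrac]
  have hLb_nonneg : 0 ≤ Lb := by
    rw [hLb_eq]
    exact Real.logb_nonneg (by norm_num)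
      (le_add_of_nonneg_right (div_nonneg hδpos.le (hQpos b).le))
  have hLb_le : Lb ≤ c * δ / Q b := by
    rw [hLb_eq]
    calc Real.logb 2 (1 + δ / Q b) ≤ (δ / Q b) / Real.log 2 :=
          logb_one_add_le _ (div_nonneg hδpos.le (hQpos b).le)
      _ = c * δ / Q b := by rw [hcdef2]; ring
  have hPb2Qb : P b ≤ 2 * Q b := by
    rw [hPbv, two_mul]
    exact add_le_add le_rfl (hQδ b)
  -- bound on D
  have hDabs : |D| ≤ 2 * (c * δ) := by
    rw [hDval]
    exact D_abs_bound (hPpos a) (hQpos b) hLa_abs hLa_nonpos hLb_nonneg hLb_le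
      hPb2Qb (hPpos b).le (by positivity)
  -- term bounds
  have h1p2M : (0:ℝ) ≤ 1 + 2 * pmax :=
    add_nonneg zero_le_one (mul_nonneg (by norm_num) hpmax0)
  have hcδ : (0:ℝ) ≤ c * δ := mul_nonneg hcpos.le hδpos.le
  have hX : (0:ℝ) ≤ (c * δ * (1 + 2 * pmax)) ^ 3 :=
    pow_nonneg (mul_nonneg hcδ h1p2M) 3
  have h1Mpos : (0:ℝ) < 1 - pmax := sub_pos.mpr hpmaxlt
  have habs_sub : ∀ x y : ℝ, |x - y| ≤ |x| + |y| := fun x y => abs_sub x y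
  have hT1 : P a * |La - D| ^ 3 ≤ (c * δ * (1 + 2 * pmax)) ^ 3 / pmin ^ 2 := by
    have h1 : |La - D| ≤ c * δ / P a * (1 + 2 * pmax) :=
      sub_abs_bound (hPpos a) (hPM a) hLa_abs hDabs (by positivity)
    have h2 : |La - D| ^ 3 ≤ (c * δ / P a * (1 + 2 * pmax)) ^ 3 :=
      pow_le_pow_left₀ (abs_nonneg _) h1 3
    calc P a * |La - D| ^ 3 ≤ P a * (c * δ / P a * (1 + 2 * pmax)) ^ 3 :=
          mul_le_mul_of_nonneg_left h2 (hPpos a).le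
      _ = (c * δ * (1 + 2 * pmax)) ^ 3 / P a ^ 2 := by
          have hPane : P a ≠ 0 := (hPpos a).ne'
          field_simp
      _ ≤ (c * δ * (1 + 2 * pmax)) ^ 3 / pmin ^ 2 :=
          div_le_div_of_nonneg_left hX (pow_pos hpminpos 2)
            (pow_le_pow_left₀ hpminpos.le (hPm a) 2)
  have hT2 : P b * |Lb - D| ^ 3 ≤ 2 * (c * δ * (1 + 2 * pmax)) ^ 3 / pmin ^ 2 := by
    have h4 : |Lb| ≤ c * δ / Q b := by
      rw [abs_of_nonneg hLb_nonneg]; exact hLb_le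
    have h1 : |Lb - D| ≤ c * δ / Q b * (1 + 2 * pmax) :=
      sub_abs_bound (hQpos b) (hQM b) h4 hDabs (by positivity)
    have h2 : |Lb - D| ^ 3 ≤ (c * δ / Q b * (1 + 2 * pmax)) ^ 3 :=
      pow_le_pow_left₀ (abs_nonneg _) h1 3
    calc P b * |Lb - D| ^ 3 ≤ (2 * Q b) * (c * δ / Q b * (1 + 2 * pmax)) ^ 3 := by
          apply mul_le_mul hPb2Qb h2 (by positivity)
            (mul_nonneg (by norm_num) (hQpos b).le)
      _ = 2 * (c * δ * (1 + 2 * pmax)) ^ 3 / Q b ^ 2 := by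
          have hQbne : Q b ≠ 0 := (hQpos b).ne'
          field_simp
      _ ≤ 2 * (c * δ * (1 + 2 * pmax)) ^ 3 / pmin ^ 2 :=
          div_le_div_of_nonneg_left (mul_nonneg (by norm_num) hX) (pow_pos hpminpos 2)
            (pow_le_pow_left₀ hpminpos.le (hQm b) 2)
  have hT3 : (∑ y ∈ univ \ ({a, b} : Finset (Fin k)), P y) * |D| ^ 3
      ≤ 8 * (c * δ) ^ 3 := by
    have h1 : |D| ^ 3 ≤ (2 * (c * δ)) ^ 3 := pow_le_pow_left₀ (abs_nonneg _) hDabs 3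
    calc (∑ y ∈ univ \ ({a, b} : Finset (Fin k)), P y) * |D| ^ 3
        ≤ 1 * (2 * (c * δ)) ^ 3 :=
          mul_le_mul hrest1 h1 (by positivity) zero_le_one
      _ = 8 * (c * δ) ^ 3 := by ring
  have hTtotal : Tllr P Q ≤
      3 * (c * δ * (1 + 2 * pmax)) ^ 3 / pmin ^ 2 + 8 * (c * δ) ^ 3 := by
    rw [hTval]
    calc (∑ y ∈ univ \ {a, b}, P y) * |D| ^ 3
          + (P a * |La - D| ^ 3 + P b * |Lb - D| ^ 3)
        ≤ 8 * (c * δ) ^ 3 + ((c * δ * (1 + 2 * pmax)) ^ 3 / pmin ^ 2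
            + 2 * (c * δ * (1 + 2 * pmax)) ^ 3 / pmin ^ 2) :=
          add_le_add hT3 (add_le_add hT1 hT2)
      _ = 3 * (c * δ * (1 + 2 * pmax)) ^ 3 / pmin ^ 2 + 8 * (c * δ) ^ 3 := by ring
  -- polynomial inequality
  have hpoly : (3 * (1 + 2 * pmax) ^ 3 + 8) * (1 - pmax) ^ 3 ≤ 128 / 3 :=
    poly_bound hpmax0 hpmaxlt.le
  -- convert RHS
  have hr₀eq : r₀ = 2 * c * r ^ 2 := by rw [hrsq]; field_simp
  have h32 : r₀ ^ ((3:ℝ)/2) = (2 * c) ^ ((3:ℝ)/2) * r ^ 3 := by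
    rw [hr₀eq, Real.mul_rpow (by positivity) (by positivity)]
    congr 1
    rw [← Real.rpow_natCast r 2, ← Real.rpow_mul hrpos.le]
    norm_num
  have h2c : (2 * c) ^ ((3:ℝ)/2) = 2 * Real.sqrt 2 * c ^ ((3:ℝ)/2) := by
    rw [Real.mul_rpow (by norm_num) hcpos.le]
    congr 1
    rw [show (3:ℝ)/2 = 1 + 1/2 by norm_num, Real.rpow_add (by norm_num), Real.rpow_one,
      ← Real.sqrt_eq_rpow]
  have hcc : c ^ ((3:ℝ)/2) * c ^ ((3:ℝ)/2) = c ^ 3 := by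
    rw [← Real.rpow_add hcpos]
    norm_num
  have hRHSeq : 36 * Real.sqrt 2 * c ^ ((3:ℝ)/2) / (pmin ^ 2 * (1 - pmax) ^ 3)
      * r₀ ^ ((3:ℝ)/2) = 144 * c ^ 3 * r ^ 3 / (pmin ^ 2 * (1 - pmax) ^ 3) := by
    rw [h32, h2c, div_mul_eq_mul_div]
    congr 1
    have h2' : Real.sqrt 2 * Real.sqrt 2 = 2 := Real.mul_self_sqrt (by norm_num)
    calc 36 * Real.sqrt 2 * c ^ ((3:ℝ)/2) * (2 * Real.sqrt 2 * c ^ ((3:ℝ)/2) * r ^ 3)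
        = 72 * (Real.sqrt 2 * Real.sqrt 2) * (c ^ ((3:ℝ)/2) * c ^ ((3:ℝ)/2)) * r ^ 3 := by
          ring
      _ = 144 * c ^ 3 * r ^ 3 := by rw [h2', hcc]; ring
  rw [hRHSeq]
  -- final assembly
  have hδ3 : δ ^ 3 ≤ 27 / 8 * r ^ 3 := by
    calc δ ^ 3 ≤ (3/2 * r) ^ 3 := pow_le_pow_left₀ hδpos.le hδr 3
      _ = 27 / 8 * r ^ 3 := by ring
  have hfinal : 3 * (c * δ * (1 + 2 * pmax)) ^ 3 / pmin ^ 2 + 8 * (c * δ) ^ 3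
      ≤ 144 * c ^ 3 * r ^ 3 / (pmin ^ 2 * (1 - pmax) ^ 3) := by
    rw [div_add' _ _ _ (pow_ne_zero 2 hpminpos.ne'),
      div_le_div_iff₀ (pow_pos hpminpos 2)
        (mul_pos (pow_pos hpminpos 2) (pow_pos h1Mpos 3))]
    have hAle : 3 * (1 + 2 * pmax) ^ 3 + 8 * pmin ^ 2 ≤ 3 * (1 + 2 * pmax) ^ 3 + 8 := by
      have hsq : pmin ^ 2 ≤ 1 := pow_le_one₀ hpminpos.le hpmin1
      exact add_le_add le_rfl (mul_le_of_le_one_right (by norm_num) hsq)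
    have hA0 : (0:ℝ) ≤ 3 * (1 + 2 * pmax) ^ 3 + 8 * pmin ^ 2 :=
      add_nonneg (mul_nonneg (by norm_num) (pow_nonneg h1p2M 3))
        (mul_nonneg (by norm_num) (sq_nonneg pmin))
    have h1M0 : (0:ℝ) ≤ (1 - pmax) ^ 3 := (pow_pos h1Mpos 3).le
    have hkey : (3 * (1 + 2 * pmax) ^ 3 + 8 * pmin ^ 2) * (1 - pmax) ^ 3 ≤ 128 / 3 := by
      calc (3 * (1 + 2 * pmax) ^ 3 + 8 * pmin ^ 2) * (1 - pmax) ^ 3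
          ≤ (3 * (1 + 2 * pmax) ^ 3 + 8) * (1 - pmax) ^ 3 :=
            mul_le_mul_of_nonneg_right hAle h1M0
        _ ≤ 128 / 3 := hpoly
    have t1 : δ ^ 3 * ((3 * (1 + 2 * pmax) ^ 3 + 8 * pmin ^ 2) * (1 - pmax) ^ 3)
        ≤ (27 / 8 * r ^ 3) * (128 / 3) :=
      mul_le_mul hδ3 hkey (mul_nonneg hA0 h1M0) (by positivity)
    have step : c ^ 3 * δ ^ 3 * ((3 * (1 + 2 * pmax) ^ 3 + 8 * pmin ^ 2) * (1 - pmax) ^ 3)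
        ≤ 144 * c ^ 3 * r ^ 3 := by
      calc c ^ 3 * δ ^ 3 * ((3 * (1 + 2 * pmax) ^ 3 + 8 * pmin ^ 2) * (1 - pmax) ^ 3)
          = c ^ 3 * (δ ^ 3 * ((3 * (1 + 2 * pmax) ^ 3 + 8 * pmin ^ 2) * (1 - pmax) ^ 3)) := by
            ring
        _ ≤ c ^ 3 * ((27 / 8 * r ^ 3) * (128 / 3)) :=
            mul_le_mul_of_nonneg_left t1 (by positivity)
        _ = 144 * c ^ 3 * r ^ 3 := by ring
    calc (3 * (c * δ * (1 + 2 * pmax)) ^ 3 + 8 * (c * δ) ^ 3 * pmin ^ 2)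
          * (pmin ^ 2 * (1 - pmax) ^ 3)
        = (c ^ 3 * δ ^ 3 * ((3 * (1 + 2 * pmax) ^ 3 + 8 * pmin ^ 2) * (1 - pmax) ^ 3))
            * pmin ^ 2 := by ring
      _ ≤ (144 * c ^ 3 * r ^ 3) * pmin ^ 2 :=
            mul_le_mul_of_nonneg_right step (sq_nonneg pmin)
      _ = 144 * c ^ 3 * r ^ 3 * pmin ^ 2 := by ring
  exact le_trans hTtotal hfinal
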